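/- Every strongly self-CS-Rickart object of an abelian category 𝒜 is strictly SIP-extending. -/

import Mathlib

open CategoryTheory CategoryTheory.Limits

universe w v u

variable {C : Type u} [Category.{v} C] [Abelian C]

/-- A morphism is a section if it is a split monomorphism. -/
def IsSection {K M : C} (s : K ⟶ M) : Prop := ∃ p : M ⟶ K, s ≫ p = 𝟙 K

/-- A morphism is a retraction if it is a split epimorphism. -/
def IsRetraction {M P : C} (r : M ⟶ P) : Prop := ∃ s : P ⟶ M, s ≫ r = 𝟙 P

/-- An essential monomorphism: a mono `e` such that any `h` with `e ≫ h` mono is mono. -/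
def EssentialMono {K L : C} (e : K ⟶ L) : Prop :=
  Mono e ∧ ∀ ⦃P : C⦄ (h : L ⟶ P), Mono (e ≫ h) → Mono h

/-- A superfluous epimorphism: an epi `t` such that any `h` with `h ≫ t` epi is epi. -/
def SuperfluousEpi {P Q : C} (t : P ⟶ Q) : Prop :=
  Epi t ∧ ∀ ⦃X : C⦄ (h : X ⟶ P), Epi (h ≫ t) → Epi h

/-- A fully invariant morphism into `M`: every endomorphism of `M` restricts along it. -/
def FullyInvariant {L M : C} (s : L ⟶ M) : Prop :=
  ∀ h : M ⟶ M, ∃ α : L ⟶ L, s ≫ h = α ≫ s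

/-- A fully coinvariant morphism out of `N`: every endomorphism of `N` descends along it. -/
def FullyCoinvariant {N P : C} (r : N ⟶ P) : Prop :=
  ∀ h : N ⟶ N, ∃ β : P ⟶ P, h ≫ r = r ≫ β

/-- An object is weak duo if every section into it is fully invariant. -/
def WeakDuo (X : C) : Prop := ∀ ⦃K : C⦄ (s : K ⟶ X), IsSection s → FullyInvariant s

/-- `N` is `M`-CS-Rickart. -/
def CSRickart (M N : C) : Prop :=
  ∀ f : M ⟶ N, ∃ (L : C) (e : kernel f ⟶ L) (s : L ⟶ M),
    EssentialMono e ∧ IsSection s ∧ kernel.ι f = e ≫ s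

/-- `N` is strongly `M`-CS-Rickart. -/
def StronglyCSRickart (M N : C) : Prop :=
  ∀ f : M ⟶ N, ∃ (L : C) (e : kernel f ⟶ L) (s : L ⟶ M),
    EssentialMono e ∧ IsSection s ∧ FullyInvariant s ∧ kernel.ι f = e ≫ s

/-- `N` is dual `M`-CS-Rickart. -/
def DualCSRickart (M N : C) : Prop :=
  ∀ f : M ⟶ N, ∃ (P : C) (r : N ⟶ P) (t : P ⟶ cokernel f),
    IsRetraction r ∧ SuperfluousEpi t ∧ cokernel.π f = r ≫ t

/-- `N` is dual strongly `M`-CS-Rickart. -/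
def DualStronglyCSRickart (M N : C) : Prop :=
  ∀ f : M ⟶ N, ∃ (P : C) (r : N ⟶ P) (t : P ⟶ cokernel f),
    IsRetraction r ∧ FullyCoinvariant r ∧ SuperfluousEpi t ∧ cokernel.π f = r ≫ t

/-- `N` is strongly `M`-Rickart. -/
def StronglyRickart (M N : C) : Prop :=
  ∀ f : M ⟶ N, IsSection (kernel.ι f) ∧ FullyInvariant (kernel.ι f)

/-- `N` is dual strongly `M`-Rickart. -/
def DualStronglyRickart (M N : C) : Prop :=
  ∀ f : M ⟶ N, IsRetraction (cokernel.π f) ∧ FullyCoinvariant (cokernel.π f)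

/-- `N` is `M`-𝒦-nonsingular. -/
def KNonsingular (M N : C) : Prop :=
  ∀ f : M ⟶ N, EssentialMono (kernel.ι f) → f = 0

/-- `M` is `N`-𝒯-nonsingular. -/
def TNonsingular (M N : C) : Prop :=
  ∀ f : M ⟶ N, SuperfluousEpi (cokernel.π f) → f = 0

/-- `A` is an essential subobject of `B` (in the subobject lattice of `M`). -/
def EssentialIn {M : C} (A B : Subobject M) : Prop :=
  A ≤ B ∧ ∀ X : Subobject M, X ≤ B → X ⊓ A = ⊥ → X = ⊥

/-- A subobject is a direct summand if its inclusion splits. -/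
def SubDirectSummand {M : C} (U : Subobject M) : Prop := IsSection U.arrow

/-- A subobject is fully invariant if its inclusion monomorphism is fully invariant. -/
def SubFullyInvariant {M : C} (U : Subobject M) : Prop := FullyInvariant U.arrow

/-- `M` is strictly SIP-extending. -/
def StrictlySIPExtending (M : C) : Prop :=
  ∀ A B : Subobject M,
    (∃ U, SubDirectSummand U ∧ EssentialIn A U) →
    (∃ V, SubDirectSummand V ∧ EssentialIn B V) →
    ∃ W, SubDirectSummand W ∧ SubFullyInvariant W ∧ EssentialIn (A ⊓ B) W

/-- `M` is strictly SSIP-extending: for any family of subobjects, each essential in a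
direct summand, any greatest lower bound of the family is essential in a fully invariant
direct summand. -/
def StrictlySSIPExtending (M : C) : Prop :=
  ∀ ⦃ι : Type w⦄ (A : ι → Subobject M) (K : Subobject M), IsGLB (Set.range A) K →
    (∀ i, ∃ U, SubDirectSummand U ∧ EssentialIn (A i) U) →
    ∃ W, SubDirectSummand W ∧ SubFullyInvariant W ∧ EssentialIn K W

/-- An object is indecomposable: nonzero, and any biproduct decomposition is trivial. -/
def IndecomposableObj (M : C) : Prop :=
  ¬ IsZero M ∧ ∀ (A B : C), Nonempty (M ≅ A ⊞ B) → IsZero A ∨ IsZero B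

lemma fullyInvariant_iso_comp {K L M : C} (φ : K ⟶ L) (ψ : L ⟶ K) (s : L ⟶ M)
    (hφψ : φ ≫ ψ = 𝟙 K) (hψφ : ψ ≫ φ = 𝟙 L) (hs : FullyInvariant s) :
    FullyInvariant (φ ≫ s) := by
  intro g
  obtain ⟨α, hα⟩ := hs g
  refine ⟨φ ≫ α ≫ ψ, ?_⟩
  rw [Category.assoc, hα]
  simp only [Category.assoc]
  rw [← Category.assoc ψ φ s, hψφ, Category.id_comp]

/-- In a strongly self-CS-Rickart object, every direct summand subobject is fully
invariant. -/
lemma weakDuoOf {M : C} (h : StronglyCSRickart M M) (U : Subobject M)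
    (hU : SubDirectSummand U) : SubFullyInvariant U := by
  obtain ⟨p, hp⟩ := hU
  set fM : M ⟶ M := 𝟙 M - p ≫ U.arrow with hfM
  have hUf : U.arrow ≫ fM = 0 := by
    rw [hfM, Preadditive.comp_sub, Category.comp_id, ← Category.assoc, hp,
      Category.id_comp, sub_self]
  set l : (U : C) ⟶ kernel fM := kernel.lift fM U.arrow hUf with hl
  have hlι : l ≫ kernel.ι fM = U.arrow := kernel.lift_ι _ _ _
  have hk : kernel.ι fM ≫ fM = 0 := kernel.condition _
  rw [hfM, Preadditive.comp_sub, Category.comp_id, sub_eq_zero] at hk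
  set m : kernel fM ⟶ (U : C) := kernel.ι fM ≫ p with hm
  have hmι : m ≫ U.arrow = kernel.ι fM := by
    rw [hm, Category.assoc, ← hk]
  have hlm : l ≫ m = 𝟙 (U : C) := by
    have : (l ≫ m) ≫ U.arrow = 𝟙 (U : C) ≫ U.arrow := by
      rw [Category.assoc, hmι, hlι, Category.id_comp]
    exact (cancel_mono U.arrow).mp this
  have hml : m ≫ l = 𝟙 (kernel fM) := by
    have : (m ≫ l) ≫ kernel.ι fM = 𝟙 (kernel fM) ≫ kernel.ι fM := by
      rw [Category.assoc, hlι, hmι, Category.id_comp]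
    exact (cancel_mono (kernel.ι fM)).mp this
  obtain ⟨L, e, s, hess, _, hfinv, heq⟩ := h fM
  -- `kernel.ι fM` is a section with retraction `p ≫ l`
  have hιr : kernel.ι fM ≫ (p ≫ l) = 𝟙 (kernel fM) := by
    have : kernel.ι fM ≫ p ≫ l = m ≫ l := by rw [hm, Category.assoc]
    rw [this, hml]
  set t : L ⟶ kernel fM := s ≫ (p ≫ l) with ht
  have het : e ≫ t = 𝟙 (kernel fM) := by
    rw [ht, ← Category.assoc, ← heq, hιr]
  have hmonot : Mono t := by
    refine hess.2 t ?_
    rw [het]; infer_instance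
  have hte : t ≫ e = 𝟙 L := by
    have : (t ≫ e) ≫ t = 𝟙 L ≫ t := by
      rw [Category.assoc, het, Category.comp_id, Category.id_comp]
    exact (cancel_mono t).mp this
  -- U.arrow = (l ≫ e) ≫ s with l ≫ e an isomorphism
  have harr : U.arrow = (l ≫ e) ≫ s := by
    rw [Category.assoc, ← heq, hlι]
  have h1 : (l ≫ e) ≫ (t ≫ m) = 𝟙 (U : C) := by
    calc (l ≫ e) ≫ t ≫ m = l ≫ (e ≫ t) ≫ m := by simp only [Category.assoc]
    _ = l ≫ m := by rw [het, Category.id_comp]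
    _ = 𝟙 (U : C) := hlm
  have h2 : (t ≫ m) ≫ (l ≫ e) = 𝟙 L := by
    calc (t ≫ m) ≫ l ≫ e = t ≫ (m ≫ l) ≫ e := by simp only [Category.assoc]
    _ = t ≫ e := by rw [hml, Category.id_comp]
    _ = 𝟙 L := hte
  rw [SubFullyInvariant, harr]
  exact fullyInvariant_iso_comp (l ≫ e) (t ≫ m) s h1 h2 hfinv

theorem stmt12 (M : C) (h : StronglyCSRickart M M) : StrictlySIPExtending M := by
  rintro A B ⟨U, hU, hAU⟩ ⟨V, hV, hBV⟩
  -- V is fully invariant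
  have hVfi : SubFullyInvariant V := weakDuoOf h V hV
  obtain ⟨pU, hpU⟩ := hU
  obtain ⟨pV, hpV⟩ := hV
  set e : M ⟶ M := pU ≫ U.arrow with he
  set f : M ⟶ M := pV ≫ V.arrow with hf
  have hUe : U.arrow ≫ e = U.arrow := by
    rw [he, ← Category.assoc, hpU, Category.id_comp]
  have hVf : V.arrow ≫ f = V.arrow := by
    rw [hf, ← Category.assoc, hpV, Category.id_comp]
  -- key commutation from full invariance of V
  have hPf : f ≫ e ≫ f = f ≫ e := by
    obtain ⟨α, hα⟩ := hVfi e
    calc f ≫ e ≫ f = pV ≫ (V.arrow ≫ e) ≫ f := by rw [hf]; simp only [Category.assoc]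
    _ = pV ≫ α ≫ V.arrow ≫ f := by rw [hα]; simp only [Category.assoc]
    _ = pV ≫ α ≫ V.arrow := by rw [hVf]
    _ = pV ≫ V.arrow ≫ e := by rw [← hα]
    _ = f ≫ e := by rw [hf, Category.assoc]
  set g : M ⟶ M := f ≫ e with hg
  have hgg : g ≫ g = g := by
    calc g ≫ g = (f ≫ e ≫ f) ≫ e := by rw [hg]; simp only [Category.assoc]
    _ = (f ≫ e) ≫ e := by rw [hPf]
    _ = f ≫ pU ≫ (U.arrow ≫ e) := by rw [he]; simp only [Category.assoc]
    _ = g := by rw [hUe, hg, he]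
  set φ : M ⟶ M := 𝟙 M - g with hφ
  -- the inclusion of U ⊓ V is killed by φ
  have harre : (U ⊓ V).arrow ≫ e = (U ⊓ V).arrow := by
    have : (U ⊓ V).arrow = Subobject.ofLE _ _ (inf_le_left : U ⊓ V ≤ U) ≫ U.arrow :=
      (Subobject.ofLE_arrow _).symm
    rw [this, Category.assoc, hUe]
  have harrf : (U ⊓ V).arrow ≫ f = (U ⊓ V).arrow := by
    have : (U ⊓ V).arrow = Subobject.ofLE _ _ (inf_le_right : U ⊓ V ≤ V) ≫ V.arrow :=
      (Subobject.ofLE_arrow _).symm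
    rw [this, Category.assoc, hVf]
  have harrg : (U ⊓ V).arrow ≫ g = (U ⊓ V).arrow := by
    rw [hg, ← Category.assoc, harrf, harre]
  have harrφ : (U ⊓ V).arrow ≫ φ = 0 := by
    rw [hφ, Preadditive.comp_sub, Category.comp_id, harrg, sub_self]
  -- the kernel of φ equals U ⊓ V
  have hιφ : kernel.ι φ ≫ g = kernel.ι φ := by
    have hc := kernel.condition φ
    rw [hφ, Preadditive.comp_sub, Category.comp_id, sub_eq_zero] at hc
    exact hc.symm
  set u := kernel.lift φ (U ⊓ V).arrow harrφ with hu
  have huι : u ≫ kernel.ι φ = (U ⊓ V).arrow := kernel.lift_ι _ _ _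
  have hfacU : U.Factors (kernel.ι φ) := by
    refine (Subobject.factors_iff _ _).mpr ⟨kernel.ι φ ≫ f ≫ pU, ?_⟩
    simp only [Category.assoc]
    show kernel.ι φ ≫ (f ≫ pU) ≫ U.arrow = kernel.ι φ
    rw [Category.assoc f pU U.arrow, ← he, ← hg, hιφ]
  have hfacV : V.Factors (kernel.ι φ) := by
    refine (Subobject.factors_iff _ _).mpr ⟨kernel.ι φ ≫ (f ≫ e) ≫ pV, ?_⟩
    simp only [Category.assoc]
    show kernel.ι φ ≫ ((f ≫ e) ≫ pV) ≫ V.arrow = kernel.ι φ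
    rw [Category.assoc (f ≫ e) pV V.arrow, ← hf, Category.assoc f e f, hPf, hιφ]
  have hfac : (U ⊓ V).Factors (kernel.ι φ) :=
    (Subobject.inf_factors _).mpr ⟨hfacU, hfacV⟩
  set v := (U ⊓ V).factorThru _ hfac with hv
  have hvι : v ≫ (U ⊓ V).arrow = kernel.ι φ := Subobject.factorThru_arrow _ _ _
  have huv : u ≫ v = 𝟙 _ := by
    have : (u ≫ v) ≫ (U ⊓ V).arrow = 𝟙 _ ≫ (U ⊓ V).arrow := by
      rw [Category.assoc, hvι, huι, Category.id_comp]
    exact (cancel_mono (U ⊓ V).arrow).mp this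
  -- retraction of kernel.ι φ
  have hgφ : g ≫ φ = 0 := by
    rw [hφ, Preadditive.comp_sub, Category.comp_id, hgg, sub_self]
  set r : M ⟶ kernel φ := kernel.lift φ g hgφ with hr
  have hrι : r ≫ kernel.ι φ = g := kernel.lift_ι _ _ _
  have hιr : kernel.ι φ ≫ r = 𝟙 _ := by
    have : (kernel.ι φ ≫ r) ≫ kernel.ι φ = 𝟙 _ ≫ kernel.ι φ := by
      rw [Category.assoc, hrι, hιφ, Category.id_comp]
    exact (cancel_mono (kernel.ι φ)).mp this
  -- U ⊓ V is a direct summand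
  have hW : SubDirectSummand (U ⊓ V) := by
    refine ⟨r ≫ v, ?_⟩
    calc (U ⊓ V).arrow ≫ r ≫ v = (u ≫ kernel.ι φ) ≫ r ≫ v := by rw [huι]
    _ = u ≫ (kernel.ι φ ≫ r) ≫ v := by simp only [Category.assoc]
    _ = u ≫ v := by rw [hιr, Category.id_comp]
    _ = 𝟙 _ := huv
  refine ⟨U ⊓ V, hW, weakDuoOf h _ hW, ?_, ?_⟩
  · exact inf_le_inf hAU.1 hBV.1
  · intro X hX hXAB
    have hXA : X ⊓ A = ⊥ := by
      refine hBV.2 (X ⊓ A) (le_trans inf_le_left (le_trans hX inf_le_right)) ?_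
      rw [← inf_assoc] at hXAB
      exact hXAB
    exact hAU.2 X (le_trans hX inf_le_left) hXA
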